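/- arXiv:1805.08651 — 3 statements merged into one kernel-verified Lean document; each statement's English description precedes it below -/
import Mathlib

section
/- Let v: ℝⁿ → ℝⁿ be a C¹ diffeomorphism such that for every y ∈ ℝⁿ and every pair j ≠ j′, the product of partial derivatives ∂vᵢ/∂yⱼ(y) · ∂vᵢ/∂y_{j′}(y) = 0 for all i. Then each row of the Jacobian of v has at most one nonzero entry at each point; moreover, by invertibility and continuity of the Jacobian, there exists a permutation π of {1,…,n} such that each vᵢ depends only on y_{π(i)}, and each map y_{π(i)} ↦ vᵢ is an invertible scalar function. -/
/-- If `v : ℝⁿ → ℝⁿ` is a C¹ diffeomorphism whose partial derivatives satisfy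
`∂vᵢ/∂yⱼ · ∂vᵢ/∂y_{j'} = 0` for all `j ≠ j'` and every point, then there is a
permutation `π` such that `∂vᵢ/∂yⱼ ≡ 0` whenever `j ≠ π(i)`, and each `vᵢ`
depends only on `y_{π(i)}` through an invertible scalar function. -/
theorem stmt7
    {n : ℕ}
    (v w : (Fin n → ℝ) → (Fin n → ℝ))
    (hv : ContDiff ℝ 1 v) (hw : ContDiff ℝ 1 w)
    (hlinv : Function.LeftInverse w v) (hrinv : Function.RightInverse w v)
    (pd : Fin n → Fin n → (Fin n → ℝ) → ℝ)
    (hpd : ∀ i j y, pd i j y = deriv (fun t => v (Function.update y j t) i) (y j))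
    (hprod : ∀ (y : Fin n → ℝ) (i j j' : Fin n), j ≠ j' →
        pd i j y * pd i j' y = 0) :
    (∀ (y : Fin n → ℝ) (i : Fin n), ∃ j : Fin n,
        ∀ j' : Fin n, j' ≠ j → pd i j' y = 0) ∧
    ∃ π : Equiv.Perm (Fin n),
      (∀ (i j : Fin n) (y : Fin n → ℝ), j ≠ π i → pd i j y = 0) ∧
      (∀ i : Fin n, ∃ φ : ℝ → ℝ, Function.Bijective φ ∧
          ∀ y : Fin n → ℝ, v y i = φ (y (π i))) := by
  classical
  have hvd : Differentiable ℝ v := hv.differentiable one_ne_zero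
  have hwd : Differentiable ℝ w := hw.differentiable one_ne_zero
  -- pd in terms of fderiv
  have hA : ∀ i j y, pd i j y = fderiv ℝ v y (Pi.single j 1) i := by
    intro i j y
    rw [hpd]
    have h0 : HasDerivAt (Function.update y j) (Pi.single j (1:ℝ)) (y j) :=
      hasDerivAt_update y j (y j)
    have hF : HasFDerivAt v (fderiv ℝ v y) (Function.update y j (y j)) := by
      rw [Function.update_eq_self]; exact (hvd y).hasFDerivAt
    have h1 : HasDerivAt (fun t => v (Function.update y j t))
        (fderiv ℝ v y (Pi.single j 1)) (y j) := hF.comp_hasDerivAt (y j) h0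
    exact ((ContinuousLinearMap.proj (R := ℝ) (φ := fun _ : Fin n => ℝ)
      i).hasFDerivAt.comp_hasDerivAt (y j) h1).deriv
  -- expansion of fderiv in coordinates
  have hB : ∀ (y d : Fin n → ℝ) (i : Fin n),
      fderiv ℝ v y d i = ∑ j, d j * pd i j y := by
    intro y d i
    have hd : d = ∑ j, d j • (Pi.single j 1 : Fin n → ℝ) := by
      funext k
      simp [Finset.sum_apply, Pi.single_apply, Finset.sum_ite_eq']
    conv_lhs => rw [hd]
    rw [map_sum]
    simp [Finset.sum_apply, hA]
  -- fderiv v y is bijective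
  have hC : ∀ y : Fin n → ℝ, Function.Bijective (fderiv ℝ v y) := by
    intro y
    have e1 : ∀ x, fderiv ℝ w (v y) (fderiv ℝ v y x) = x := by
      intro x
      have hcomp : fderiv ℝ (w ∘ v) y = (fderiv ℝ w (v y)).comp (fderiv ℝ v y) :=
        fderiv_comp y (hwd _) (hvd _)
      have hid : w ∘ v = id := funext hlinv
      rw [hid, fderiv_id] at hcomp
      exact (congrArg (fun L => L x) hcomp.symm)
    have e2 : ∀ z, fderiv ℝ v y (fderiv ℝ w (v y) z) = z := by
      intro z
      have hcomp : fderiv ℝ (v ∘ w) (v y)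
          = (fderiv ℝ v (w (v y))).comp (fderiv ℝ w (v y)) :=
        fderiv_comp (v y) (hvd _) (hwd _)
      have hid : v ∘ w = id := funext hrinv
      rw [hid, fderiv_id, hlinv y] at hcomp
      exact (congrArg (fun L => L z) hcomp.symm)
    exact ⟨Function.LeftInverse.injective e1, fun z => ⟨fderiv ℝ w (v y) z, e2 z⟩⟩
  -- at most one nonzero per row
  have huniq : ∀ (y : Fin n → ℝ) (i j j' : Fin n),
      pd i j y ≠ 0 → j' ≠ j → pd i j' y = 0 := by
    intro y i j j' h hne
    rcases mul_eq_zero.mp (hprod y i j j' (fun h' => hne h'.symm)) with h0 | h0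
    · exact absurd h0 h
    · exact h0
  -- each row has a nonzero entry
  have hex : ∀ (y : Fin n → ℝ) (i : Fin n), ∃ j, pd i j y ≠ 0 := by
    intro y i
    by_contra h
    push_neg at h
    obtain ⟨x, hx⟩ := (hC y).2 (Pi.single i 1)
    have h1 : (Pi.single i 1 : Fin n → ℝ) i = 0 := by
      rw [← hx, hB]; simp [h]
    simp at h1
  -- injectivity of the nonzero-column assignment at a point
  have hinj : ∀ (y : Fin n → ℝ) (i i' j : Fin n),
      pd i j y ≠ 0 → pd i' j y ≠ 0 → i = i' := by
    intro y i i' j hi hi'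
    by_contra hne
    obtain ⟨x, hx⟩ := (hC y).2 (Pi.single i 1)
    have hrow : ∀ (k : Fin n), pd k j y ≠ 0 →
        fderiv ℝ v y x k = x j * pd k j y := by
      intro k hk
      rw [hB]
      exact Finset.sum_eq_single j (fun j' _ hj' => by
        rw [huniq y k j j' hk hj', mul_zero]) (by simp)
    have h1 : x j * pd i j y = 1 := by
      rw [← hrow i hi, hx]; simp
    have h2 : x j * pd i' j y = 0 := by
      rw [← hrow i' hi', hx]; simp [Pi.single_apply, hne]
    rcases mul_eq_zero.mp h2 with h0 | h0
    · rw [h0, zero_mul] at h1; exact zero_ne_one h1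
    · exact hi' h0
  -- continuity of pd
  have hcont : ∀ i j, Continuous (fun y => pd i j y) := by
    intro i j
    have h1 : Continuous (fun y => fderiv ℝ v y) := hv.continuous_fderiv one_ne_zero
    have h2 : Continuous (fun y => fderiv ℝ v y (Pi.single j 1) i) :=
      (continuous_apply i).comp
        ((ContinuousLinearMap.apply ℝ (Fin n → ℝ) (Pi.single j 1)).continuous.comp h1)
    simpa [← hA] using h2
  -- the nonzero column is globally constant
  have hglob : ∀ i : Fin n, ∃ j, (∀ y, pd i j y ≠ 0) ∧
      ∀ j' y, j' ≠ j → pd i j' y = 0 := by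
    intro i
    obtain ⟨j, hj⟩ := hex 0 i
    have hall : ∀ y, pd i j y ≠ 0 := by
      intro y
      -- the set where row i is nonzero at column j is clopen and nonempty
      have hopen : IsOpen {z : Fin n → ℝ | pd i j z ≠ 0} :=
        isOpen_ne.preimage (hcont i j)
      have hopen' : IsOpen {z : Fin n → ℝ | pd i j z = 0} := by
        have : {z : Fin n → ℝ | pd i j z = 0}
            = ⋃ j' ∈ ({j' | j' ≠ j} : Set (Fin n)), {z | pd i j' z ≠ 0} := by
          ext z
          simp only [Set.mem_setOf_eq, Set.mem_iUnion]
          constructor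
          · intro hz
            obtain ⟨j'', hj''⟩ := hex z i
            exact ⟨j'', fun h => (h ▸ hj'') hz, hj''⟩
          · rintro ⟨j', hj', hz⟩
            exact huniq z i j' j hz (fun h => hj' h.symm)
        rw [this]
        exact isOpen_biUnion fun j' _ => isOpen_ne.preimage (hcont i j')
      have hclosed : IsClosed {z : Fin n → ℝ | pd i j z ≠ 0} := by
        rw [← isOpen_compl_iff]
        convert hopen' using 1
        ext z; simp
      rcases isClopen_iff.mp ⟨hclosed, hopen⟩ with h | h
      · exact absurd (h ▸ hj : (0 : Fin n → ℝ) ∈ (∅ : Set (Fin n → ℝ))) (by simp)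
      · exact (h ▸ Set.mem_univ y : y ∈ {z : Fin n → ℝ | pd i j z ≠ 0})
    exact ⟨j, hall, fun j' y hj' => huniq y i j j' (hall y) hj'⟩
  choose π0 hπ0ne hπ0z using hglob
  have hπinj : Function.Injective π0 := by
    intro i i' h
    exact hinj 0 i i' (π0 i) (hπ0ne i 0) (h ▸ hπ0ne i' 0)
  let π : Equiv.Perm (Fin n) := Equiv.ofBijective π0 (Finite.injective_iff_bijective.mp hπinj)
  have hπ : ∀ i, π i = π0 i := fun i => rfl
  -- each vᵢ depends only on coordinate π0 i
  have hdep : ∀ (i : Fin n) (y y' : Fin n → ℝ), y (π0 i) = y' (π0 i) → v y i = v y' i := by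
    intro i y y' hyy
    set d : Fin n → ℝ := y' - y with hd
    have hdpi : d (π0 i) = 0 := by simp [hd, hyy]
    have hline : ∀ t : ℝ, HasDerivAt (fun s : ℝ => v (y + s • d) i) 0 t := by
      intro t
      have hc : HasDerivAt (fun s : ℝ => y + s • d) d t := by
        simpa using ((hasDerivAt_id t).smul_const d).const_add y
      have h1 := ((hvd (y + t • d)).hasFDerivAt).comp_hasDerivAt t hc
      have h2 := ((ContinuousLinearMap.proj (R := ℝ)
        (φ := fun _ : Fin n => ℝ) i).hasFDerivAt).comp_hasDerivAt t h1
      have h3 : fderiv ℝ v (y + t • d) d i = 0 := by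
        rw [hB]
        refine Finset.sum_eq_zero fun j _ => ?_
        by_cases hj : j = π0 i
        · rw [hj, hdpi, zero_mul]
        · rw [hπ0z i j _ hj, mul_zero]
      simpa [h3, Function.comp_def, ContinuousLinearMap.proj_apply] using h2
    have hconst := is_const_of_deriv_eq_zero (f := fun s : ℝ => v (y + s • d) i)
      (fun t => (hline t).differentiableAt) (fun t => (hline t).deriv) 0 1
    simpa [hd] using hconst
  refine ⟨fun y i => ⟨π0 i, fun j' hj' => hπ0z i j' y hj'⟩, π,
    fun i j y hj => hπ0z i j y hj, ?_⟩
  intro i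
  refine ⟨fun t => v (Function.update (0 : Fin n → ℝ) (π0 i) t) i, ⟨?_, ?_⟩, ?_⟩
  · -- injective
    intro a b hab
    have hv' : v (Function.update (0 : Fin n → ℝ) (π0 i) a)
        = v (Function.update (0 : Fin n → ℝ) (π0 i) b) := by
      funext k
      by_cases hk : k = i
      · subst hk; exact hab
      · refine hdep k _ _ ?_
        have hne : π0 k ≠ π0 i := fun h => hk (hπinj h)
        simp [Function.update_apply, hne]
    have h1 := congrFun (hlinv.injective hv') (π0 i)
    simpa using h1
  · -- surjective
    intro c
    refine ⟨w (Function.update (0 : Fin n → ℝ) i c) (π0 i), ?_⟩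
    have h1 : v (Function.update (0 : Fin n → ℝ) (π0 i)
          (w (Function.update (0 : Fin n → ℝ) i c) (π0 i))) i
        = v (w (Function.update (0 : Fin n → ℝ) i c)) i :=
      hdep i _ _ (by simp)
    show v (Function.update (0 : Fin n → ℝ) (π0 i)
        (w (Function.update (0 : Fin n → ℝ) i c) (π0 i))) i = c
    rw [h1, hrinv]
    simp
  · intro y
    exact hdep i y (Function.update (0 : Fin n → ℝ) (π0 i) (y (π0 i))) (by simp)
end

section
/- Let v: ℝⁿ → ℝⁿ be a C¹ diffeomorphism whose Jacobian matrix at every point has at most one nonzero entry in each row. If ℝⁿ is connected, then the positions of the nonzero entries are the same at all points: there is a single permutation π such that ∂vᵢ/∂yⱼ ≡ 0 whenever j ≠ π(i). -/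
/-- If `v : ℝⁿ → ℝⁿ` is a C¹ diffeomorphism whose Jacobian has at most one
nonzero entry per row at every point, then (since ℝⁿ is connected) the
positions of the nonzero entries are globally constant: there is a single
permutation `π` with `∂vᵢ/∂yⱼ ≡ 0` whenever `j ≠ π(i)`. -/
theorem stmt8
    {n : ℕ}
    (v w : (Fin n → ℝ) → (Fin n → ℝ))
    (hv : ContDiff ℝ 1 v) (hw : ContDiff ℝ 1 w)
    (hlinv : Function.LeftInverse w v) (hrinv : Function.RightInverse w v)
    (pd : Fin n → Fin n → (Fin n → ℝ) → ℝ)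
    (hpd : ∀ i j y, pd i j y = deriv (fun t => v (Function.update y j t) i) (y j))
    (hrow : ∀ (y : Fin n → ℝ) (i : Fin n), ∃ j : Fin n,
        ∀ j' : Fin n, j' ≠ j → pd i j' y = 0) :
    ∃ π : Equiv.Perm (Fin n),
      ∀ (i j : Fin n), j ≠ π i → ∀ y : Fin n → ℝ, pd i j y = 0 := by
  classical
  have hv' : Differentiable ℝ v := hv.differentiable one_ne_zero
  have hw' : Differentiable ℝ w := hw.differentiable one_ne_zero
  -- pd as an entry of the Fréchet derivative
  have key : ∀ i j y, pd i j y = fderiv ℝ v y (Pi.single j 1) i := by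
    intro i j y
    rw [hpd]
    have h1 : HasFDerivAt v (fderiv ℝ v y) y := (hv' y).hasFDerivAt
    have h2 : HasDerivAt (Function.update y j) (Pi.single j (1 : ℝ)) (y j) :=
      hasDerivAt_update y j (y j)
    have h1' : HasFDerivAt v (fderiv ℝ v y) (Function.update y j (y j)) := by
      rwa [Function.update_eq_self]
    have h3 : HasDerivAt (fun t => v (Function.update y j t))
        (fderiv ℝ v y (Pi.single j 1)) (y j) := h1'.comp_hasDerivAt _ h2
    have h4 : HasDerivAt (fun t => v (Function.update y j t) i)
        ((fderiv ℝ v y (Pi.single j 1)) i) (y j) :=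
      ((ContinuousLinearMap.proj (R := ℝ) (φ := fun _ : Fin n => ℝ) i).hasFDerivAt).comp_hasDerivAt _ h3
    exact h4.deriv
  -- fderiv v y is surjective
  have hsurj : ∀ (y z : Fin n → ℝ), ∃ x, fderiv ℝ v y x = z := by
    intro y z
    have h1 : HasFDerivAt (v ∘ w) ((fderiv ℝ v y).comp (fderiv ℝ w (v y))) (v y) := by
      have hvy : HasFDerivAt v (fderiv ℝ v y) (w (v y)) := by
        rw [hlinv y]; exact (hv' y).hasFDerivAt
      exact hvy.comp (v y) (hw' (v y)).hasFDerivAt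
    have h2 : HasFDerivAt (v ∘ w) (ContinuousLinearMap.id ℝ (Fin n → ℝ)) (v y) := by
      have hid : v ∘ w = id := funext hrinv
      rw [hid]; exact hasFDerivAt_id _
    have heq := h1.unique h2
    refine ⟨fderiv ℝ w (v y) z, ?_⟩
    have := congrFun (congrArg (fun (L : (Fin n → ℝ) →L[ℝ] (Fin n → ℝ)) => (L z : Fin n → ℝ)) heq)
    simpa using congrArg (fun (L : (Fin n → ℝ) →L[ℝ] (Fin n → ℝ)) => L z) heq
  -- expansion in the standard basis
  have sum_eq : ∀ (y x : Fin n → ℝ) (i : Fin n),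
      fderiv ℝ v y x i = ∑ j, x j * pd i j y := by
    intro y x i
    have hx : x = ∑ j, x j • (Pi.single j (1 : ℝ) : Fin n → ℝ) := by
      funext k
      simp [Finset.sum_apply, Pi.single_apply, Finset.sum_ite_eq', mul_comm]
    conv_lhs => rw [hx]
    rw [map_sum]
    simp only [map_smul, Finset.sum_apply, Pi.smul_apply, smul_eq_mul]
    exact Finset.sum_congr rfl fun j _ => by rw [key]
  -- no row is entirely zero
  have row_ne : ∀ (y : Fin n → ℝ) (i : Fin n), ∃ j, pd i j y ≠ 0 := by
    intro y i
    by_contra h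
    push_neg at h
    obtain ⟨x, hx⟩ := hsurj y (Pi.single i 1)
    have h1 := sum_eq y x i
    rw [hx] at h1
    simp [h] at h1
  -- the column selector
  set σ : (Fin n → ℝ) → Fin n → Fin n := fun y i => Classical.choose (hrow y i) with hσ
  have hσ0 : ∀ (y : Fin n → ℝ) (i j : Fin n), j ≠ σ y i → pd i j y = 0 :=
    fun y i => Classical.choose_spec (hrow y i)
  have hσne : ∀ (y : Fin n → ℝ) (i : Fin n), pd i (σ y i) y ≠ 0 := by
    intro y i
    obtain ⟨j, hj⟩ := row_ne y i
    by_cases hje : j = σ y i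
    · rwa [← hje]
    · exact absurd (hσ0 y i j hje) hj
  -- row sums collapse to a single term
  have single_term : ∀ (y x : Fin n → ℝ) (i : Fin n),
      fderiv ℝ v y x i = x (σ y i) * pd i (σ y i) y := by
    intro y x i
    rw [sum_eq]
    exact Finset.sum_eq_single (σ y i)
      (fun j _ hj => by rw [hσ0 y i j hj, mul_zero]) (by simp)
  -- σ y is injective
  have σinj : ∀ y, Function.Injective (σ y) := by
    intro y i₁ i₂ hi
    by_contra hne
    obtain ⟨x, hx⟩ := hsurj y (Pi.single i₁ 1)
    have h1 := single_term y x i₁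
    have h2 := single_term y x i₂
    rw [hx] at h1 h2
    rw [Pi.single_eq_same] at h1
    rw [Pi.single_eq_of_ne (Ne.symm hne)] at h2
    have hx1 : x (σ y i₁) ≠ 0 := by
      intro h0; rw [h0, zero_mul] at h1; exact one_ne_zero h1
    rw [← hi] at h2
    exact hσne y i₂ (by
      rcases mul_eq_zero.mp h2.symm with h | h
      · exact absurd h hx1
      · rw [← hi]; exact h)
  -- pd i j is continuous
  have contpd : ∀ i j, Continuous (fun y => pd i j y) := by
    intro i j
    have hc : Continuous (fun y => fderiv ℝ v y) := hv.continuous_fderiv one_ne_zero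
    have : Continuous (fun y => fderiv ℝ v y (Pi.single j 1) i) :=
      (continuous_apply i).comp (hc.clm_apply continuous_const)
    simpa only [← key] using this
  -- σ is locally constant
  have hlc : IsLocallyConstant σ := by
    rw [IsLocallyConstant.iff_eventually_eq]
    intro y₀
    have hev : ∀ i : Fin n, ∀ᶠ z in nhds y₀, σ z i = σ y₀ i := by
      intro i
      have h1 : ∀ᶠ z in nhds y₀, pd i (σ y₀ i) z ≠ 0 :=
        (contpd i (σ y₀ i)).continuousAt.eventually_ne (hσne y₀ i)
      filter_upwards [h1] with z hz
      by_contra hne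
      exact hz (hσ0 z i (σ y₀ i) (fun h => hne h.symm))
    have := (Filter.eventually_all (ι := Fin n)).mpr hev
    filter_upwards [this] with z hz
    exact funext hz
  have hconst : ∀ y, σ y = σ 0 := fun y => hlc.apply_eq_of_preconnectedSpace y 0
  have hbij : Function.Bijective (σ 0) := Finite.injective_iff_bijective.mp (σinj 0)
  refine ⟨Equiv.ofBijective (σ 0) hbij, ?_⟩
  intro i j hj y
  have : j ≠ σ y i := by rw [hconst y]; exact hj
  exact hσ0 y i j this
end

section
/- Suppose each independent component sᵢ is conditionally exponential of order k = 1 given u, i.e., qᵢ(sᵢ,u) = log Qᵢ(sᵢ) + \tilde{q}ᵢ(sᵢ)λᵢ(u) − log Zᵢ(u). Then for any fixed s ∈ ℝⁿ, the vectors w(s,u) ∈ ℝ^{2n} defined by w(s,u) = (∂q₁/∂s₁,…,∂qₙ/∂sₙ, ∂²q₁/∂s₁²,…,∂²qₙ/∂sₙ²) lie, as u varies, in an affine subspace of dimension at most n; in particular one cannot find 2n+1 values u₀,…,u_{2n} such that the 2n differences w(s,uⱼ) − w(s,u₀) are linearly independent. -/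
/-- For conditionally exponential components of order `k = 1`, i.e.
`qᵢ(s,u) = log Qᵢ(s) + q̃ᵢ(s)λᵢ(u) − log Zᵢ(u)`, the vectors
`w(s,u) = (∂qᵢ/∂sᵢ, ∂²qᵢ/∂sᵢ²)ᵢ ∈ ℝ^{2n}` lie (as `u` varies, `s` fixed)
in an affine subspace of dimension at most `n` (an affine combination of `n`
fixed vectors with coefficients `λᵢ(u)`); in particular there are no
`2n+1` points `u₀,…,u_{2n}` making the `2n` differences
`w(s,uⱼ) − w(s,u₀)` linearly independent: the Assumption of Variability
cannot hold. -/
theorem stmt9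
    {n m : ℕ} (hn : 0 < n)
    (L tq : Fin n → ℝ → ℝ)            -- `L i = log Q i`, `tq i = q̃ᵢ`
    (lam logZ : Fin n → (Fin m → ℝ) → ℝ)
    (hL : ∀ i, ContDiff ℝ 2 (L i)) (htq : ∀ i, ContDiff ℝ 2 (tq i))
    (q : Fin n → ℝ → (Fin m → ℝ) → ℝ)
    (hq : ∀ i s u, q i s u = L i s + tq i s * lam i u - logZ i u)
    (w : (Fin n → ℝ) → (Fin m → ℝ) → (Fin n → ℝ × ℝ))
    (hw : ∀ s u i, w s u i =
      (deriv (fun t => q i t u) (s i),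
       deriv (deriv (fun t => q i t u)) (s i)))
    (s : Fin n → ℝ) :
    (∃ (c : Fin n → ℝ × ℝ) (b : Fin n → (Fin n → ℝ × ℝ)),
        ∀ u : Fin m → ℝ, w s u = c + ∑ i, lam i u • b i) ∧
    ¬ ∃ us : Fin (2 * n + 1) → (Fin m → ℝ),
        LinearIndependent ℝ (fun j : Fin (2 * n) => w s (us j.succ) - w s (us 0)) := by
  -- differentiability facts
  have hLd : ∀ i, Differentiable ℝ (L i) := fun i => (hL i).differentiable two_ne_zero
  have htqd : ∀ i, Differentiable ℝ (tq i) := fun i => (htq i).differentiable two_ne_zero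
  have hLd2 : ∀ i, Differentiable ℝ (deriv (L i)) := by
    intro i
    have h2 : ContDiff ℝ ((1:ℕ)+1) (L i) := by exact_mod_cast hL i
    exact (contDiff_succ_iff_deriv.mp h2).2.2.differentiable one_ne_zero
  have htqd2 : ∀ i, Differentiable ℝ (deriv (tq i)) := by
    intro i
    have h2 : ContDiff ℝ ((1:ℕ)+1) (tq i) := by exact_mod_cast htq i
    exact (contDiff_succ_iff_deriv.mp h2).2.2.differentiable one_ne_zero
  -- first derivative computation
  have hder : ∀ i u, deriv (fun t => q i t u)
      = fun t => deriv (L i) t + deriv (tq i) t * lam i u := by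
    intro i u
    funext x
    have : (fun t => q i t u) = fun t => (L i t + tq i t * lam i u) - logZ i u := by
      funext t; rw [hq]
    rw [this, deriv_sub_const,
      deriv_fun_add (hLd i x) ((htqd i x).mul_const _), deriv_mul_const (htqd i x)]
  have hder2 : ∀ i u, deriv (deriv (fun t => q i t u)) (s i)
      = deriv (deriv (L i)) (s i) + deriv (deriv (tq i)) (s i) * lam i u := by
    intro i u
    rw [hder i u,
      deriv_fun_add (hLd2 i (s i)) ((htqd2 i (s i)).mul_const _),
      deriv_mul_const (htqd2 i (s i))]
  -- the affine decomposition
  set c : Fin n → ℝ × ℝ := fun i => (deriv (L i) (s i), deriv (deriv (L i)) (s i)) with hc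
  set b : Fin n → (Fin n → ℝ × ℝ) :=
    fun i => Pi.single i (deriv (tq i) (s i), deriv (deriv (tq i)) (s i)) with hb
  have key : ∀ u, w s u = c + ∑ i, lam i u • b i := by
    intro u
    funext j
    have hsum : (∑ i, lam i u • b i) j
        = lam j u • (deriv (tq j) (s j), deriv (deriv (tq j)) (s j)) := by
      rw [Finset.sum_apply]
      simp [hb, Pi.single_apply, smul_ite]
    rw [Pi.add_apply, hsum, hw, hder2 j u, hder j u]
    simp only [hc]
    simp [Prod.ext_iff]
    constructor <;> ring
  refine ⟨⟨c, b, key⟩, ?_⟩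
  rintro ⟨us, hind⟩
  set p := Submodule.span ℝ (Set.range b) with hp
  have hmem : ∀ j : Fin (2 * n), w s (us j.succ) - w s (us 0) ∈ p := by
    intro j
    rw [key, key]
    have e : ∑ i, (lam i (us j.succ) - lam i (us 0)) • b i
        = (c + ∑ i, lam i (us j.succ) • b i) - (c + ∑ i, lam i (us 0) • b i) := by
      simp only [sub_smul, Finset.sum_sub_distrib]
      abel
    rw [← e]
    exact Submodule.sum_mem _ fun i _ =>
      Submodule.smul_mem _ _ (Submodule.subset_span ⟨i, rfl⟩)
  set v : Fin (2 * n) → p := fun j => ⟨_, hmem j⟩ with hv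
  have hindv : LinearIndependent ℝ v := by
    apply LinearIndependent.of_comp p.subtype
    exact hind
  have hfin : Module.Finite ℝ p := by
    rw [hp]
    exact FiniteDimensional.span_of_finite ℝ (Set.finite_range b)
  have h1 : Fintype.card (Fin (2 * n)) ≤ Module.finrank ℝ p :=
    hindv.fintype_card_le_finrank
  have h2 : Module.finrank ℝ p ≤ n := by
    simpa [Set.finrank] using finrank_range_le_card (R := ℝ) b
  simp only [Fintype.card_fin] at h1
  omega
end
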